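/- Let A⁽¹⁾, …, A⁽ᵍ⁾ be measurements on ℂ^d, where A⁽ⁱ⁾ has n i outcomes and all of its effects are nonzero, and let ρ ∈ Matrix (Fin d) (Fin d) ℂ be positive definite with trace 1. Suppose Y is a g-outcome measurement on ℂ^{d²} (i.e., Y : Fin g → Matrix (Fin d × Fin d) (Fin d × Fin d) ℂ with each Y i positive semidefinite and ∑ i, Y i = 1) such that ∑ i, Re (Matrix.trace (F_ρ(A⁽ⁱ⁾) * Y i)) > min d (∏ i, n i). Then the measurements A⁽¹⁾, …, A⁽ᵍ⁾ are incompatible: there is no measurement C such that A⁽ⁱ⁾ ⪯ C for every i. -/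

import Mathlib

open Matrix
open scoped Kronecker ComplexOrder

noncomputable section

/-- A measurement (POVM): a finite family of positive semidefinite matrices summing to `1`. -/
def IsMeasurement {ι κ : Type*} [Fintype ι] [DecidableEq ι] [Fintype κ]
    (A : κ → Matrix ι ι ℂ) : Prop :=
  (∀ x, (A x).PosSemidef) ∧ ∑ x, A x = 1

/-- `A` is a post-processing of `B`: `A ⪯ B`. -/
def PostProc {ι : Type*} {n m : ℕ}
    (A : Fin n → Matrix ι ι ℂ) (B : Fin m → Matrix ι ι ℂ) : Prop :=
  ∃ μ : Fin n → Fin m → ℝ,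
    (∀ x y, 0 ≤ μ x y) ∧ (∀ y, ∑ x, μ x y = 1) ∧
    (∀ x, A x = ∑ y, (μ x y : ℂ) • B y)

/-- The outer product `|E⟩⟨F|` of the vectorizations of two matrices. -/
def outerProd {ι : Type*} (E F : Matrix ι ι ℂ) : Matrix (ι × ι) (ι × ι) ℂ :=
  Matrix.of fun p q => E p.1 p.2 * star (F q.1 q.2)

/-- The (un-normalized) Fisher information map of a measurement. -/
noncomputable def Fisher {ι κ : Type*} [Fintype ι] [Fintype κ]
    (A : κ → Matrix ι ι ℂ) : Matrix (ι × ι) (ι × ι) ℂ :=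
  ∑ x, (Matrix.trace (A x))⁻¹ • outerProd (A x) (A x)

/-- The square root of a positive semidefinite matrix, as defined in the older Mathlib
(removed upstream; spelled out here with its old meaning). -/
noncomputable def Matrix.PosSemidef.sqrt {𝕜 : Type*} [RCLike 𝕜] {n : Type*} [Fintype n]
    [DecidableEq n] {A : Matrix n n 𝕜} (hA : A.PosSemidef) : Matrix n n 𝕜 :=
  (hA.1.eigenvectorUnitary : Matrix n n 𝕜) * diagonal ((↑) ∘ (√·) ∘ hA.1.eigenvalues) *
    (star hA.1.eigenvectorUnitary : Matrix n n 𝕜)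

/-- The generalized Fisher information map of a measurement, relative to a
positive definite state `ρ` (with positive semidefinite square root `ρ^{1/2}`). -/
noncomputable def FisherRho {ι κ : Type*} [Fintype ι] [DecidableEq ι] [Fintype κ]
    {ρ : Matrix ι ι ℂ} (hρ : ρ.PosDef) (A : κ → Matrix ι ι ℂ) :
    Matrix (ι × ι) (ι × ι) ℂ :=
  ∑ x, (Matrix.trace (ρ * A x))⁻¹ •
    outerProd (hρ.posSemidef.sqrt * A x) (hρ.posSemidef.sqrt * A x)

/-- The height of a finite family of self-adjoint matrices: the infimum of the traces of
Hermitian matrices dominating every member in the Loewner order. -/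
noncomputable def height {ι κ : Type*} [Fintype ι] [Fintype κ]
    (X : κ → Matrix ι ι ℂ) : ℝ :=
  sInf { t : ℝ | ∃ H : Matrix ι ι ℂ, H.IsHermitian ∧
    (∀ i, (H - X i).PosSemidef) ∧ t = (Matrix.trace H).re }
section SqrtAux

lemma Matrix.PosSemidef.sqrt_mul_self {𝕜 : Type*} [RCLike 𝕜] {n : Type*} [Fintype n]
    [DecidableEq n] {A : Matrix n n 𝕜} (hA : A.PosSemidef) : hA.sqrt * hA.sqrt = A := by
  unfold Matrix.PosSemidef.sqrt
  have hU : (star hA.1.eigenvectorUnitary : Matrix n n 𝕜) * (hA.1.eigenvectorUnitary : Matrix n n 𝕜) = 1 :=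
    Unitary.coe_star_mul_self _
  conv_rhs => rw [hA.1.spectral_theorem, Unitary.conjStarAlgAut_apply]
  rw [show ∀ a b c d e f : Matrix n n 𝕜, a * b * c * (d * e * f) = a * (b * (c * d) * e) * f by
    intros; simp only [mul_assoc], hU, mul_one, diagonal_mul_diagonal]
  congr 2
  congr 1
  funext i
  simp only [Function.comp_apply]
  rw [← RCLike.ofReal_mul, Real.mul_self_sqrt (hA.eigenvalues_nonneg i)]

lemma Matrix.PosSemidef.posSemidef_sqrt {𝕜 : Type*} [RCLike 𝕜] {n : Type*} [Fintype n]
    [DecidableEq n] {A : Matrix n n 𝕜} (hA : A.PosSemidef) : hA.sqrt.PosSemidef := by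
  unfold Matrix.PosSemidef.sqrt
  have h := (Matrix.PosSemidef.diagonal (d := ((↑) ∘ (√·) ∘ hA.1.eigenvalues : n → 𝕜))
    (fun i => RCLike.ofReal_nonneg.2 (Real.sqrt_nonneg _))).mul_mul_conjTranspose_same
      (hA.1.eigenvectorUnitary : Matrix n n 𝕜)
  rw [Matrix.star_eq_conjTranspose]
  exact h

lemma Matrix.posSemidef_iff_eq_transpose_mul_self {n : Type*} [Fintype n] [DecidableEq n]
    {A : Matrix n n ℂ} : A.PosSemidef ↔ ∃ B : Matrix n n ℂ, A = Bᴴ * B :=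
  ⟨fun hA => ⟨hA.sqrt, by rw [hA.posSemidef_sqrt.isHermitian.eq, hA.sqrt_mul_self]⟩,
    fun ⟨B, hB⟩ => hB ▸ Matrix.posSemidef_conjTranspose_mul_self B⟩

end SqrtAux

section Aux

open Finset

attribute [local instance] Complex.partialOrder

namespace Stmt18

variable {ι : Type*} [Fintype ι] [DecidableEq ι]

lemma trace_conjT_mul_self_eq_zero {m : Type*} [Fintype m] {A : Matrix ι m ℂ}
    (h : Matrix.trace (A * Aᴴ) = 0) : A = 0 := by
  have h2 : ∑ i : ι, ∑ j : m, Complex.normSq (A i j) = 0 := by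
    have := congrArg Complex.re h
    simpa [Matrix.trace, Matrix.diag, Matrix.mul_apply, Matrix.conjTranspose_apply,
      Complex.mul_conj, Complex.re_sum] using this
  ext i j
  have h3 := (Finset.sum_eq_zero_iff_of_nonneg (fun i _ => Finset.sum_nonneg
      (fun j _ => Complex.normSq_nonneg (A i j)))).1 h2 i (Finset.mem_univ i)
  have h4 := (Finset.sum_eq_zero_iff_of_nonneg (fun j _ => Complex.normSq_nonneg (A i j))).1
      h3 j (Finset.mem_univ j)
  simpa [Complex.normSq_eq_zero] using h4

lemma psd_trace_nonneg {M : Matrix ι ι ℂ} (hM : M.PosSemidef) : 0 ≤ Matrix.trace M := by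
  rw [Matrix.trace]
  refine Finset.sum_nonneg fun i _ => ?_
  have := hM.dotProduct_mulVec_nonneg (Pi.single i 1)
  simpa [dotProduct, Matrix.mulVec_single, Pi.single_apply, Matrix.diag] using this

lemma trace_mul_psd_nonneg {P Q : Matrix ι ι ℂ} (hP : P.PosSemidef) (hQ : Q.PosSemidef) :
    0 ≤ Matrix.trace (P * Q) := by
  have h1 : Matrix.trace (P * Q) = Matrix.trace (hQ.sqrt * P * hQ.sqrt) := by
    conv_lhs => rw [← hQ.sqrt_mul_self]
    rw [← mul_assoc, Matrix.trace_mul_comm, ← mul_assoc]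
  rw [h1]
  have h2 : (hQ.sqrt * P * hQ.sqrt).PosSemidef := by
    have := hP.mul_mul_conjTranspose_same hQ.sqrt
    rwa [hQ.posSemidef_sqrt.isHermitian.eq] at this
  exact psd_trace_nonneg h2

lemma trace_mul_psd_re {P Q : Matrix ι ι ℂ} (hP : P.PosSemidef) (hQ : Q.PosSemidef) :
    Matrix.trace (P * Q) = ((Matrix.trace (P * Q)).re : ℂ) := by
  have := (Complex.nonneg_iff.1 (trace_mul_psd_nonneg hP hQ)).2
  exact Complex.ext rfl this.symm

lemma sqrt_mul_eq_zero {P Q : Matrix ι ι ℂ} (hP : P.PosSemidef) (hQ : Q.PosSemidef)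
    (h : Matrix.trace (P * Q) = 0) : hP.sqrt * Q = 0 := by
  have hA : hP.sqrt * hQ.sqrt = 0 := by
    apply trace_conjT_mul_self_eq_zero
    have e1 : (hP.sqrt * hQ.sqrt) * (hP.sqrt * hQ.sqrt)ᴴ
        = hP.sqrt * Q * hP.sqrt := by
      rw [Matrix.conjTranspose_mul, hP.posSemidef_sqrt.isHermitian.eq,
        hQ.posSemidef_sqrt.isHermitian.eq]
      rw [show hP.sqrt * hQ.sqrt * (hQ.sqrt * hP.sqrt) = hP.sqrt * (hQ.sqrt * hQ.sqrt) * hP.sqrt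
        by simp only [mul_assoc], hQ.sqrt_mul_self]
    rw [e1]
    rw [Matrix.trace_mul_comm, ← mul_assoc, hP.sqrt_mul_self, h]
  have : hP.sqrt * Q = (hP.sqrt * hQ.sqrt) * hQ.sqrt := by
    rw [mul_assoc, hQ.sqrt_mul_self]
  rw [this, hA, zero_mul]

/-- vectorized pairing -/
def qfL (u : ι × ι → ℂ) (E : Matrix ι ι ℂ) : ℂ := ∑ p : ι × ι, star (u p) * E p.1 p.2

lemma dot_mulVec_sum {n : Type*} [Fintype n] {κ : Type*} (s : Finset κ)
    (u : n → ℂ) (M : κ → Matrix n n ℂ) :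
    dotProduct (star u) ((∑ y ∈ s, M y) *ᵥ u)
      = ∑ y ∈ s, dotProduct (star u) (M y *ᵥ u) := by
  classical
  induction s using Finset.induction_on with
  | empty => simp
  | insert _ _ h ih =>
    rw [Finset.sum_insert h, Finset.sum_insert h, Matrix.add_mulVec,
      dotProduct_add, ih]

lemma dot_mulVec_smul {n : Type*} [Fintype n] (c : ℂ) (u : n → ℂ) (M : Matrix n n ℂ) :
    dotProduct (star u) ((c • M) *ᵥ u)
      = c * dotProduct (star u) (M *ᵥ u) := by
  rw [Matrix.smul_mulVec, dotProduct_smul, smul_eq_mul]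

lemma dot_mulVec_sub {n : Type*} [Fintype n] (u : n → ℂ) (M N : Matrix n n ℂ) :
    dotProduct (star u) ((M - N) *ᵥ u)
      = dotProduct (star u) (M *ᵥ u) - dotProduct (star u) (N *ᵥ u) := by
  rw [Matrix.sub_mulVec, dotProduct_sub]

lemma qf_outer (u : ι × ι → ℂ) (E : Matrix ι ι ℂ) :
    dotProduct (star u) (outerProd E E *ᵥ u)
      = (Complex.normSq (qfL u E) : ℂ) := by
  have : dotProduct (star u) (outerProd E E *ᵥ u) = qfL u E * star (qfL u E) := by
    simp only [dotProduct, Matrix.mulVec, outerProd, Matrix.of_apply, qfL,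
      Pi.star_apply, star_sum, star_mul', star_star]
    rw [Finset.sum_mul_sum]
    apply Finset.sum_congr rfl; intro p _
    rw [Finset.mul_sum]
    apply Finset.sum_congr rfl; intro q _
    ring
  rw [this, ← Complex.mul_conj]
  rfl

lemma herm_smul_outer (r : ℝ) (E : Matrix ι ι ℂ) :
    ((r : ℂ) • outerProd E E).IsHermitian := by
  ext p q
  simp only [Matrix.conjTranspose_apply, Matrix.smul_apply, outerProd, Matrix.of_apply,
    smul_eq_mul, star_mul', star_star, Complex.star_def, Complex.conj_ofReal, Complex.conj_conj]
  ring

lemma cs_key {κ : Type*} [Fintype κ] (c r : κ → ℝ) (b : κ → ℂ)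
    (hc : ∀ y, 0 ≤ c y) (hr : ∀ y, 0 ≤ r y) (hb0 : ∀ y, r y = 0 → b y = 0) :
    (∑ y, c y * r y)⁻¹ * Complex.normSq (∑ y, (c y : ℂ) * b y)
      ≤ ∑ y, c y * (r y)⁻¹ * Complex.normSq (b y) := by
  have hRHS : 0 ≤ ∑ y, c y * (r y)⁻¹ * Complex.normSq (b y) :=
    Finset.sum_nonneg fun y _ => mul_nonneg (mul_nonneg (hc y) (inv_nonneg.2 (hr y)))
      (Complex.normSq_nonneg _)
  set R := ∑ y, c y * r y with hR
  rcases eq_or_lt_of_le (Finset.sum_nonneg fun y _ => mul_nonneg (hc y) (hr y) : (0:ℝ) ≤ R)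
    with hR0 | hRpos
  · have hz : ∑ y, (c y : ℂ) * b y = 0 := by
      apply Finset.sum_eq_zero
      intro y _
      have : c y * r y = 0 := by
        have := (Finset.sum_eq_zero_iff_of_nonneg
          (fun y _ => mul_nonneg (hc y) (hr y))).1 hR0.symm y (Finset.mem_univ y)
        exact this
      rcases mul_eq_zero.1 this with h | h
      · rw [h]; simp
      · rw [hb0 y h]; simp
    rw [hz]
    simpa using hRHS
  · -- Cauchy-Schwarz
    have habs : ‖∑ y, (c y : ℂ) * b y‖ ≤ ∑ y, c y * ‖b y‖ := by
      refine le_trans (norm_sum_le _ _) (le_of_eq ?_)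
      apply Finset.sum_congr rfl
      intro y _
      rw [norm_mul, Complex.norm_real, Real.norm_eq_abs, abs_of_nonneg (hc y)]
    have hcs : (∑ y, c y * ‖b y‖) ^ 2
        ≤ R * ∑ y, c y * (r y)⁻¹ * Complex.normSq (b y) := by
      have := Finset.sum_mul_sq_le_sq_mul_sq Finset.univ
        (fun y => Real.sqrt (c y * r y))
        (fun y => Real.sqrt (c y * (r y)⁻¹) * ‖b y‖)
      calc (∑ y, c y * ‖b y‖) ^ 2
          = (∑ y, Real.sqrt (c y * r y) * (Real.sqrt (c y * (r y)⁻¹) * ‖b y‖)) ^ 2 := by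
            congr 1
            apply Finset.sum_congr rfl
            intro y _
            rcases eq_or_lt_of_le (hr y) with h0 | hpos
            · rw [hb0 y h0.symm]
              simp [← h0]
            · rw [← mul_assoc, ← Real.sqrt_mul (mul_nonneg (hc y) (le_of_lt hpos))]
              have : c y * r y * (c y * (r y)⁻¹) = (c y) ^ 2 := by
                field_simp
              rw [this, Real.sqrt_sq (hc y)]
        _ ≤ (∑ y, Real.sqrt (c y * r y) ^ 2) * ∑ y, (Real.sqrt (c y * (r y)⁻¹) * ‖b y‖) ^ 2 := this
        _ = R * ∑ y, c y * (r y)⁻¹ * Complex.normSq (b y) := by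
            congr 1
            · apply Finset.sum_congr rfl
              intro y _
              rw [Real.sq_sqrt (mul_nonneg (hc y) (hr y))]
            · apply Finset.sum_congr rfl
              intro y _
              rw [mul_pow, Real.sq_sqrt (mul_nonneg (hc y) (inv_nonneg.2 (hr y))), Complex.sq_norm]
    have hnormSq : Complex.normSq (∑ y, (c y : ℂ) * b y)
        ≤ R * ∑ y, c y * (r y)⁻¹ * Complex.normSq (b y) := by
      rw [← Complex.sq_norm]
      refine le_trans (pow_le_pow_left₀ (norm_nonneg _) habs 2) hcs
    rw [inv_mul_le_iff₀ hRpos]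
    exact hnormSq

lemma herm_sum {n : Type*} {κ : Type*} (s : Finset κ) (f : κ → Matrix n n ℂ)
    (h : ∀ x ∈ s, (f x).IsHermitian) : (∑ x ∈ s, f x).IsHermitian := by
  unfold Matrix.IsHermitian at *
  rw [Matrix.conjTranspose_sum]
  exact Finset.sum_congr rfl h

lemma psd_sum {n : Type*} [Fintype n] {κ : Type*} (s : Finset κ) (f : κ → Matrix n n ℂ)
    (h : ∀ x ∈ s, (f x).PosSemidef) : (∑ x ∈ s, f x).PosSemidef := by
  classical
  revert h
  refine Finset.induction_on s ?_ ?_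
  · intro _; simpa using Matrix.PosSemidef.zero
  · intro a s ha ih h
    rw [Finset.sum_insert ha]
    exact Matrix.PosSemidef.add (h a (Finset.mem_insert_self a s))
      (ih fun x hx => h x (Finset.mem_insert_of_mem hx))

lemma qfL_sum (u : ι × ι → ℂ) {κ : Type*} [Fintype κ] (f : κ → Matrix ι ι ℂ) :
    qfL u (∑ y, f y) = ∑ y, qfL u (f y) := by
  simp only [qfL, Matrix.sum_apply, Finset.mul_sum]
  exact Finset.sum_comm

lemma qfL_smul (u : ι × ι → ℂ) (z : ℂ) (E : Matrix ι ι ℂ) :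
    qfL u (z • E) = z * qfL u E := by
  simp only [qfL, Matrix.smul_apply, smul_eq_mul, Finset.mul_sum]
  exact Finset.sum_congr rfl fun p _ => by ring

lemma core_psd {ρ : Matrix ι ι ℂ} (hρ : ρ.PosDef) {κ : Type*} [Fintype κ]
    (C : κ → Matrix ι ι ℂ) (hC : ∀ y, (C y).PosSemidef) (c : κ → ℝ) (hc : ∀ y, 0 ≤ c y) :
    ((∑ y, (c y : ℂ) • ((Matrix.trace (ρ * C y))⁻¹ •
        outerProd (hρ.posSemidef.sqrt * C y) (hρ.posSemidef.sqrt * C y)))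
      - (Matrix.trace (ρ * ∑ y, (c y : ℂ) • C y))⁻¹ •
        outerProd (hρ.posSemidef.sqrt * ∑ y, (c y : ℂ) • C y)
                  (hρ.posSemidef.sqrt * ∑ y, (c y : ℂ) • C y)).PosSemidef := by
  set S := hρ.posSemidef.sqrt with hS
  set r : κ → ℝ := fun y => (Matrix.trace (ρ * C y)).re with hrdef
  have hrtr : ∀ y, Matrix.trace (ρ * C y) = ((r y : ℝ) : ℂ) :=
    fun y => trace_mul_psd_re hρ.posSemidef (hC y)
  have hr0 : ∀ y, 0 ≤ r y := fun y =>
    (Complex.nonneg_iff.1 (trace_mul_psd_nonneg hρ.posSemidef (hC y))).1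
  have hb0 : ∀ y, r y = 0 → S * C y = 0 := by
    intro y hy
    exact sqrt_mul_eq_zero hρ.posSemidef (hC y) (by rw [hrtr y, hy]; simp)
  set a : Matrix ι ι ℂ := ∑ y, (c y : ℂ) • C y with ha
  have hatr : Matrix.trace (ρ * a) = ((∑ y, c y * r y : ℝ) : ℂ) := by
    rw [ha, Matrix.mul_sum, Matrix.trace_sum]
    push_cast
    apply Finset.sum_congr rfl
    intro y _
    rw [Matrix.mul_smul, Matrix.trace_smul, hrtr y, smul_eq_mul]
  have hSa : S * a = ∑ y, (c y : ℂ) • (S * C y) := by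
    rw [ha, Matrix.mul_sum]
    exact Finset.sum_congr rfl fun y _ => (Matrix.mul_smul _ _ _)
  have hkey : ∀ y : κ, (c y : ℂ) • ((Matrix.trace (ρ * C y))⁻¹ •
        outerProd (S * C y) (S * C y))
      = ((c y * (r y)⁻¹ : ℝ) : ℂ) • outerProd (S * C y) (S * C y) := by
    intro y
    rw [hrtr y, ← Complex.ofReal_inv, smul_smul, ← Complex.ofReal_mul]
  refine Matrix.PosSemidef.of_dotProduct_mulVec_nonneg ?_ ?_
  · refine Matrix.IsHermitian.sub ?_ ?_
    · rw [Finset.sum_congr rfl fun y _ => hkey y]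
      exact herm_sum _ _ fun y _ => herm_smul_outer _ _
    · rw [hatr, ← Complex.ofReal_inv]
      exact herm_smul_outer _ _
  · intro u
    rw [dot_mulVec_sub, dot_mulVec_sum]
    have e1 : ∀ y : κ, dotProduct (star u) (((c y : ℂ) • ((Matrix.trace (ρ * C y))⁻¹ •
          outerProd (S * C y) (S * C y))) *ᵥ u)
        = ((c y * (r y)⁻¹ * Complex.normSq (qfL u (S * C y)) : ℝ) : ℂ) := by
      intro y
      rw [hkey y, dot_mulVec_smul, qf_outer]
      push_cast
      ring
    have e2 : dotProduct (star u) (((Matrix.trace (ρ * a))⁻¹ •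
          outerProd (S * a) (S * a)) *ᵥ u)
        = (((∑ y, c y * r y)⁻¹ * Complex.normSq (qfL u (S * a)) : ℝ) : ℂ) := by
      rw [hatr, ← Complex.ofReal_inv, dot_mulVec_smul, qf_outer]
      push_cast
      ring
    rw [Finset.sum_congr rfl fun y _ => e1 y, e2, ← Complex.ofReal_sum,
      ← Complex.ofReal_sub, Complex.zero_le_real]
    apply sub_nonneg.2
    have hB : qfL u (S * a) = ∑ y, (c y : ℂ) * qfL u (S * C y) := by
      rw [hSa, qfL_sum]
      exact Finset.sum_congr rfl fun y _ => qfL_smul u _ _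
    rw [hB]
    exact cs_key c r (fun y => qfL u (S * C y)) hc hr0
      (fun y hy => by have h0 := hb0 y hy; simp [qfL, h0])

lemma fisher_mono {ρ : Matrix ι ι ℂ} (hρ : ρ.PosDef) {κ₁ κ₂ : Type*} [Fintype κ₁] [Fintype κ₂]
    (A : κ₁ → Matrix ι ι ℂ) (C : κ₂ → Matrix ι ι ℂ) (hC : ∀ y, (C y).PosSemidef)
    (ν : κ₁ → κ₂ → ℝ) (hν0 : ∀ x y, 0 ≤ ν x y) (hν1 : ∀ y, ∑ x, ν x y = 1)
    (hAeq : ∀ x, A x = ∑ y, (ν x y : ℂ) • C y) :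
    (FisherRho hρ C - FisherRho hρ A).PosSemidef := by
  have key : FisherRho hρ C - FisherRho hρ A
      = ∑ x, ((∑ y, (ν x y : ℂ) • ((Matrix.trace (ρ * C y))⁻¹ •
          outerProd (hρ.posSemidef.sqrt * C y) (hρ.posSemidef.sqrt * C y)))
        - (Matrix.trace (ρ * ∑ y, (ν x y : ℂ) • C y))⁻¹ •
          outerProd (hρ.posSemidef.sqrt * ∑ y, (ν x y : ℂ) • C y)
                    (hρ.posSemidef.sqrt * ∑ y, (ν x y : ℂ) • C y)) := by
    rw [Finset.sum_sub_distrib]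
    congr 1
    · rw [Finset.sum_comm]
      unfold FisherRho
      apply Finset.sum_congr rfl
      intro y _
      rw [← Finset.sum_smul, show (∑ x : κ₁, ((ν x y : ℝ) : ℂ)) = 1 from by
        exact_mod_cast congrArg (fun t : ℝ => (t : ℂ)) (hν1 y), one_smul]
    · unfold FisherRho
      apply Finset.sum_congr rfl
      intro x _
      rw [hAeq x]
  rw [key]
  exact psd_sum _ _ fun x _ => core_psd hρ C hC (ν x) (hν0 x)

lemma bx_le (B : Matrix ι ι ℂ) (x : ι → ℂ) :
    ∑ i, Complex.normSq (∑ j, B i j * x j)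
      ≤ (∑ i, ∑ j, Complex.normSq (B i j)) * ∑ j, Complex.normSq (x j) := by
  have hper : ∀ i, Complex.normSq (∑ j, B i j * x j)
      ≤ (∑ j, Complex.normSq (B i j)) * ∑ j, Complex.normSq (x j) := by
    intro i
    rw [← Complex.sq_norm]
    have h1 : ‖∑ j, B i j * x j‖ ≤ ∑ j, ‖B i j‖ * ‖x j‖ := by
      refine le_trans (norm_sum_le _ _) (le_of_eq ?_)
      exact Finset.sum_congr rfl fun j _ => norm_mul _ _
    have h2 : (∑ j, ‖B i j‖ * ‖x j‖) ^ 2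
        ≤ (∑ j, ‖B i j‖ ^ 2) * ∑ j, ‖x j‖ ^ 2 :=
      Finset.sum_mul_sq_le_sq_mul_sq _ _ _
    calc ‖∑ j, B i j * x j‖ ^ 2
        ≤ (∑ j, ‖B i j‖ * ‖x j‖) ^ 2 := by
          apply pow_le_pow_left₀ (norm_nonneg _) h1
      _ ≤ (∑ j, ‖B i j‖ ^ 2) * ∑ j, ‖x j‖ ^ 2 := h2
      _ = (∑ j, Complex.normSq (B i j)) * ∑ j, Complex.normSq (x j) := by
          simp [Complex.sq_norm]
  calc ∑ i, Complex.normSq (∑ j, B i j * x j)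
      ≤ ∑ i, (∑ j, Complex.normSq (B i j)) * ∑ j, Complex.normSq (x j) :=
        Finset.sum_le_sum fun i _ => hper i
    _ = (∑ i, ∑ j, Complex.normSq (B i j)) * ∑ j, Complex.normSq (x j) := by
        rw [Finset.sum_mul]

lemma star_mul_self_c (z : ℂ) : star z * z = (Complex.normSq z : ℂ) := by
  rw [Complex.star_def]
  exact Complex.normSq_eq_conj_mul_self.symm

lemma psd_trace_smul_one_sub {Q : Matrix ι ι ℂ} (hQ : Q.PosSemidef) :
    ((((Matrix.trace Q).re : ℝ) : ℂ) • (1 : Matrix ι ι ℂ) - Q).PosSemidef := by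
  obtain ⟨B, hB⟩ := Matrix.posSemidef_iff_eq_transpose_mul_self.1 hQ
  have htr : Matrix.trace Q = ((∑ i, ∑ j, Complex.normSq (B i j) : ℝ) : ℂ) := by
    rw [hB, Matrix.trace]
    push_cast
    rw [Finset.sum_comm]
    apply Finset.sum_congr rfl
    intro i _
    rw [Matrix.diag_apply, Matrix.mul_apply]
    apply Finset.sum_congr rfl
    intro j _
    rw [Matrix.conjTranspose_apply]
    exact star_mul_self_c _
  refine Matrix.PosSemidef.of_dotProduct_mulVec_nonneg ?_ ?_
  · refine Matrix.IsHermitian.sub ?_ hQ.isHermitian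
    unfold Matrix.IsHermitian
    rw [Matrix.conjTranspose_smul, Matrix.conjTranspose_one]
    congr 1
    simp [Complex.star_def, Complex.conj_ofReal]
  · intro x
    rw [dot_mulVec_sub, dot_mulVec_smul, Matrix.one_mulVec]
    have hxx : dotProduct (star x) x = ((∑ j, Complex.normSq (x j) : ℝ) : ℂ) := by
      rw [dotProduct]
      push_cast
      exact Finset.sum_congr rfl fun j _ => star_mul_self_c (x j)
    have hQx : dotProduct (star x) (Q *ᵥ x)
        = ((∑ i, Complex.normSq (∑ j, B i j * x j) : ℝ) : ℂ) := by
      rw [hB, ← Matrix.mulVec_mulVec, dotProduct_mulVec, ← Matrix.star_mulVec]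
      rw [dotProduct]
      push_cast
      have hmv : ∀ i, (B *ᵥ x) i = ∑ j, B i j * x j := fun i => rfl
      apply Finset.sum_congr rfl
      intro i _
      rw [hmv i]
      exact star_mul_self_c _
    rw [hxx, hQx]
    have htt : (((Matrix.trace Q).re : ℝ) : ℂ) = ((∑ i, ∑ j, Complex.normSq (B i j) : ℝ) : ℂ) := by
      rw [htr, Complex.ofReal_re]
    rw [htt, ← Complex.ofReal_mul, ← Complex.ofReal_sub, Complex.zero_le_real]
    exact sub_nonneg.2 (bx_le B x)

lemma trace_outer_eq (E : Matrix ι ι ℂ) :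
    Matrix.trace (outerProd E E) = Matrix.trace (E * Eᴴ) := by
  rw [Matrix.trace, Matrix.trace]
  rw [Fintype.sum_prod_type]
  apply Finset.sum_congr rfl
  intro i _
  rw [Matrix.diag_apply, Matrix.mul_apply]
  apply Finset.sum_congr rfl
  intro j _
  rw [Matrix.conjTranspose_apply, outerProd]
  rfl

lemma term_trace_eq {ρ Q : Matrix ι ι ℂ} (hρ : ρ.PosDef) (hQ : Q.PosSemidef) :
    Matrix.trace ((Matrix.trace (ρ * Q))⁻¹ •
        outerProd (hρ.posSemidef.sqrt * Q) (hρ.posSemidef.sqrt * Q))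
      = ((((Matrix.trace (ρ * Q)).re)⁻¹ * (Matrix.trace (ρ * (Q * Q))).re : ℝ) : ℂ) := by
  set S := hρ.posSemidef.sqrt with hS
  have hQQ : (Q * Q).PosSemidef := by
    have := Matrix.posSemidef_conjTranspose_mul_self Q
    rwa [hQ.isHermitian.eq] at this
  have hEE : (S * Q) * (S * Q)ᴴ = S * (Q * Q) * S := by
    rw [Matrix.conjTranspose_mul, hQ.isHermitian.eq, hρ.posSemidef.posSemidef_sqrt.isHermitian.eq]
    simp only [mul_assoc]
    rfl
  have htr2 : Matrix.trace ((S * Q) * (S * Q)ᴴ) = Matrix.trace (ρ * (Q * Q)) := by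
    rw [hEE, Matrix.trace_mul_comm, ← mul_assoc, hρ.posSemidef.sqrt_mul_self]
  rw [Matrix.trace_smul, trace_outer_eq, htr2, smul_eq_mul,
    trace_mul_psd_re hρ.posSemidef hQ, trace_mul_psd_re hρ.posSemidef hQQ]
  simp only [Complex.ofReal_re]
  push_cast
  ring

lemma sqQ_conj {Q : Matrix ι ι ℂ} (hQ : Q.PosSemidef) (M : Matrix ι ι ℂ) :
    hQ.sqrt * M * hQ.sqrt = hQ.sqrt * M * (hQ.sqrt)ᴴ := by
  rw [hQ.posSemidef_sqrt.isHermitian.eq]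

lemma term_trace_le_trQ {ρ Q : Matrix ι ι ℂ} (hρ : ρ.PosDef) (hQ : Q.PosSemidef) :
    (Matrix.trace ((Matrix.trace (ρ * Q))⁻¹ •
        outerProd (hρ.posSemidef.sqrt * Q) (hρ.posSemidef.sqrt * Q))).re
      ≤ (Matrix.trace Q).re := by
  rw [term_trace_eq hρ hQ, Complex.ofReal_re]
  set t : ℝ := (Matrix.trace Q).re with htdef
  set r : ℝ := (Matrix.trace (ρ * Q)).re with hrdef
  set s : ℝ := (Matrix.trace (ρ * (Q * Q))).re with hsdef
  have hQQ : (Q * Q).PosSemidef := by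
    have := Matrix.posSemidef_conjTranspose_mul_self Q
    rwa [hQ.isHermitian.eq] at this
  have ht0 : 0 ≤ t := (Complex.nonneg_iff.1 (psd_trace_nonneg hQ)).1
  have hr0 : 0 ≤ r := (Complex.nonneg_iff.1 (trace_mul_psd_nonneg hρ.posSemidef hQ)).1
  have hs0 : 0 ≤ s := (Complex.nonneg_iff.1 (trace_mul_psd_nonneg hρ.posSemidef hQQ)).1
  have hpsd : ((t : ℂ) • Q - Q * Q).PosSemidef := by
    have h1 := (psd_trace_smul_one_sub hQ).mul_mul_conjTranspose_same hQ.sqrt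
    rw [← sqQ_conj hQ] at h1
    have h2 : hQ.sqrt * ((t : ℂ) • (1 : Matrix ι ι ℂ) - Q) * hQ.sqrt
        = (t : ℂ) • Q - Q * Q := by
      rw [Matrix.mul_sub, Matrix.sub_mul, Matrix.mul_smul, mul_one, Matrix.smul_mul,
        hQ.sqrt_mul_self]
      congr 1
      rw [show hQ.sqrt * Q * hQ.sqrt = hQ.sqrt * (hQ.sqrt * hQ.sqrt) * hQ.sqrt from by
        rw [hQ.sqrt_mul_self], show hQ.sqrt * (hQ.sqrt * hQ.sqrt) * hQ.sqrt
          = (hQ.sqrt * hQ.sqrt) * (hQ.sqrt * hQ.sqrt) from by simp only [mul_assoc],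
        hQ.sqrt_mul_self]
    rwa [h2] at h1
  have hstr : s ≤ t * r := by
    have h3 := trace_mul_psd_nonneg hρ.posSemidef hpsd
    rw [Matrix.mul_sub, Matrix.trace_sub, Matrix.mul_smul, Matrix.trace_smul,
      trace_mul_psd_re hρ.posSemidef hQ, trace_mul_psd_re hρ.posSemidef hQQ] at h3
    have h4 := (Complex.nonneg_iff.1 h3).1
    rw [Complex.sub_re, smul_eq_mul] at h4
    push_cast at h4
    simp only [Complex.ofReal_re] at h4
    rw [show ((t:ℂ) * (r:ℂ)).re = t * r from by push_cast; simp] at h4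
    linarith [h4]
  rcases eq_or_lt_of_le hr0 with h | h
  · have : s = 0 := le_antisymm (by rw [← h] at hstr; linarith [hstr]) hs0
    rw [this, mul_zero]
    exact ht0
  · rw [inv_mul_le_iff₀ h]
    linarith [hstr]

lemma term_trace_le_one {ρ Q : Matrix ι ι ℂ} (hρ : ρ.PosDef) (hQ : Q.PosSemidef)
    (hQ1 : ((1 : Matrix ι ι ℂ) - Q).PosSemidef) :
    (Matrix.trace ((Matrix.trace (ρ * Q))⁻¹ •
        outerProd (hρ.posSemidef.sqrt * Q) (hρ.posSemidef.sqrt * Q))).re ≤ 1 := by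
  rw [term_trace_eq hρ hQ, Complex.ofReal_re]
  set r : ℝ := (Matrix.trace (ρ * Q)).re with hrdef
  set s : ℝ := (Matrix.trace (ρ * (Q * Q))).re with hsdef
  have hQQ : (Q * Q).PosSemidef := by
    have := Matrix.posSemidef_conjTranspose_mul_self Q
    rwa [hQ.isHermitian.eq] at this
  have hr0 : 0 ≤ r := (Complex.nonneg_iff.1 (trace_mul_psd_nonneg hρ.posSemidef hQ)).1
  have hs0 : 0 ≤ s := (Complex.nonneg_iff.1 (trace_mul_psd_nonneg hρ.posSemidef hQQ)).1
  have hpsd : (Q - Q * Q).PosSemidef := by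
    have h1 := hQ1.mul_mul_conjTranspose_same hQ.sqrt
    rw [← sqQ_conj hQ] at h1
    have h2 : hQ.sqrt * ((1 : Matrix ι ι ℂ) - Q) * hQ.sqrt = Q - Q * Q := by
      rw [Matrix.mul_sub, Matrix.sub_mul, mul_one, hQ.sqrt_mul_self]
      congr 1
      rw [show hQ.sqrt * Q * hQ.sqrt = hQ.sqrt * (hQ.sqrt * hQ.sqrt) * hQ.sqrt from by
        rw [hQ.sqrt_mul_self], show hQ.sqrt * (hQ.sqrt * hQ.sqrt) * hQ.sqrt
          = (hQ.sqrt * hQ.sqrt) * (hQ.sqrt * hQ.sqrt) from by simp only [mul_assoc],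
        hQ.sqrt_mul_self]
    rwa [h2] at h1
  have hsr : s ≤ r := by
    have h3 := trace_mul_psd_nonneg hρ.posSemidef hpsd
    rw [Matrix.mul_sub, Matrix.trace_sub] at h3
    have h4 := (Complex.nonneg_iff.1 h3).1
    rw [Complex.sub_re] at h4
    linarith [h4]
  rcases eq_or_lt_of_le hr0 with h | h
  · have : s = 0 := le_antisymm (by rw [← h] at hsr; linarith) hs0
    rw [this, mul_zero]
    norm_num
  · rw [inv_mul_le_iff₀ h]
    linarith

lemma re_trace_mul_le {n : Type*} [Fintype n] [DecidableEq n] {M N Z : Matrix n n ℂ}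
    (hMN : (N - M).PosSemidef) (hZ : Z.PosSemidef) :
    (Matrix.trace (M * Z)).re ≤ (Matrix.trace (N * Z)).re := by
  have h := trace_mul_psd_nonneg hMN hZ
  rw [Matrix.sub_mul, Matrix.trace_sub] at h
  have h2 := (Complex.nonneg_iff.1 h).1
  rw [Complex.sub_re] at h2
  linarith

lemma fisher_trace_le_d {κ : Type*} [Fintype κ] {ρ : Matrix ι ι ℂ} (hρ : ρ.PosDef)
    (C : κ → Matrix ι ι ℂ) (hC : IsMeasurement C) :
    (Matrix.trace (FisherRho hρ C)).re ≤ (Fintype.card ι : ℝ) := by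
  unfold FisherRho
  rw [Matrix.trace_sum, Complex.re_sum]
  calc ∑ y, (Matrix.trace ((Matrix.trace (ρ * C y))⁻¹ •
        outerProd (hρ.posSemidef.sqrt * C y) (hρ.posSemidef.sqrt * C y))).re
      ≤ ∑ y, (Matrix.trace (C y)).re :=
        Finset.sum_le_sum fun y _ => term_trace_le_trQ hρ (hC.1 y)
    _ = (Matrix.trace (∑ y, C y)).re := by rw [Matrix.trace_sum, Complex.re_sum]
    _ = (Fintype.card ι : ℝ) := by rw [hC.2, Matrix.trace_one]; simp

lemma fisher_trace_le_card {κ : Type*} [Fintype κ] [DecidableEq κ] {ρ : Matrix ι ι ℂ} (hρ : ρ.PosDef)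
    (C : κ → Matrix ι ι ℂ) (hC : IsMeasurement C) :
    (Matrix.trace (FisherRho hρ C)).re ≤ (Fintype.card κ : ℝ) := by
  unfold FisherRho
  rw [Matrix.trace_sum, Complex.re_sum]
  have h1 : ∀ y, ((1 : Matrix ι ι ℂ) - C y).PosSemidef := by
    intro y
    have he : (1 : Matrix ι ι ℂ) - C y = ∑ z ∈ Finset.univ.erase y, C z := by
      rw [← hC.2, eq_comm]
      exact Finset.sum_erase_eq_sub (Finset.mem_univ y)
    rw [he]
    exact psd_sum _ _ fun z _ => hC.1 z
  calc ∑ y, (Matrix.trace ((Matrix.trace (ρ * C y))⁻¹ •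
        outerProd (hρ.posSemidef.sqrt * C y) (hρ.posSemidef.sqrt * C y))).re
      ≤ ∑ _y : κ, (1 : ℝ) :=
        Finset.sum_le_sum fun y _ => term_trace_le_one hρ (hC.1 y) (h1 y)
    _ = (Fintype.card κ : ℝ) := by simp

lemma psd_real_smul {n' : Type*} [Fintype n'] {M : Matrix n' n' ℂ} {a : ℝ}
    (h : 0 ≤ a) (hM : M.PosSemidef) : (((a : ℝ) : ℂ) • M).PosSemidef := by
  refine Matrix.PosSemidef.of_dotProduct_mulVec_nonneg ?_ ?_
  · unfold Matrix.IsHermitian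
    rw [Matrix.conjTranspose_smul]
    rw [show (star ((a:ℝ):ℂ)) = ((a:ℝ):ℂ) from by
      simp [Complex.star_def, Complex.conj_ofReal]]
    rw [hM.isHermitian.eq]
  · intro x
    rw [dot_mulVec_smul]
    have hz := hM.dotProduct_mulVec_nonneg x
    rw [Complex.nonneg_iff] at hz ⊢
    constructor
    · rw [Complex.mul_re]
      simp only [Complex.ofReal_re, Complex.ofReal_im, zero_mul, sub_zero]
      exact mul_nonneg h hz.1
    · rw [Complex.mul_im]
      simp only [Complex.ofReal_re, Complex.ofReal_im, zero_mul, add_zero, ← hz.2, mul_zero]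

end Stmt18
end Aux

/-- The pretty-good-measurement form of the Fisher information incompatibility
criterion: any measurement gives a lower bound on the height. -/
theorem stmt18 {d g : ℕ} (n : Fin g → ℕ)
    (A : (i : Fin g) → Fin (n i) → Matrix (Fin d) (Fin d) ℂ)
    (hA : ∀ i, IsMeasurement (A i)) (hA0 : ∀ i x, A i x ≠ 0)
    {ρ : Matrix (Fin d) (Fin d) ℂ} (hρ : ρ.PosDef) (hρtr : Matrix.trace ρ = 1)
    (Y : Fin g → Matrix (Fin d × Fin d) (Fin d × Fin d) ℂ) (hY : IsMeasurement Y)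
    (h : ((min d (∏ i, n i) : ℕ) : ℝ) <
      ∑ i, (Matrix.trace (FisherRho hρ (A i) * Y i)).re) :
    ¬ ∃ (m : ℕ) (C : Fin m → Matrix (Fin d) (Fin d) ℂ),
      IsMeasurement C ∧ ∀ i, PostProc (A i) C := by
  rintro ⟨m, C, ⟨hCpsd, hCsum⟩, hpp⟩
  classical
  choose μ hμ0 hμ1 hμeq using hpp
  -- the joint measurement with `∏ i, n i` outcomes
  let κ := (i : Fin g) → Fin (n i)
  let C' : κ → Matrix (Fin d) (Fin d) ℂ :=
    fun x => ∑ y, ((∏ i, μ i (x i) y : ℝ) : ℂ) • C y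
  have hC'psd : ∀ x, (C' x).PosSemidef := by
    intro x
    apply Stmt18.psd_sum
    intro y _
    exact Stmt18.psd_real_smul (Finset.prod_nonneg fun i _ => hμ0 i (x i) y) (hCpsd y)
  have hsum1 : ∀ y, ∑ x : κ, ∏ i, μ i (x i) y = 1 := by
    intro y
    rw [← Fintype.prod_sum (fun i a => μ i a y)]
    exact Finset.prod_eq_one fun i _ => hμ1 i y
  have hC'sum : ∑ x, C' x = 1 := by
    show ∑ x : κ, ∑ y, ((∏ i, μ i (x i) y : ℝ) : ℂ) • C y = 1
    rw [Finset.sum_comm]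
    rw [← hCsum]
    apply Finset.sum_congr rfl
    intro y _
    rw [← Finset.sum_smul, show (∑ x : κ, ((∏ i, μ i (x i) y : ℝ) : ℂ)) = 1 from by
      rw [← Complex.ofReal_sum, hsum1 y, Complex.ofReal_one], one_smul]
  have hC'meas : IsMeasurement C' := ⟨hC'psd, hC'sum⟩
  -- each A i is a post-processing of C'
  have hmono : ∀ i, (FisherRho hρ C' - FisherRho hρ (A i)).PosSemidef := by
    intro i
    have hreal : ∀ (y : Fin m) (x : Fin (n i)),
        ∑ x' : κ, (if x' i = x then (1:ℝ) else 0) * ∏ j, μ j (x' j) y = μ i x y := by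
      intro y x
      have hfun : ∀ x' : κ, (if x' i = x then (1:ℝ) else 0) * ∏ j, μ j (x' j) y
          = ∏ j, Function.update (fun j (a : Fin (n j)) => μ j a y) i
              (fun a => if a = x then μ i a y else 0) j (x' j) := by
        intro x'
        by_cases hxi : x' i = x
        · rw [if_pos hxi, one_mul]
          apply Finset.prod_congr rfl
          intro j _
          by_cases hj : j = i
          · subst hj
            rw [Function.update_self, if_pos hxi]
          · rw [Function.update_of_ne hj]
        · rw [if_neg hxi, zero_mul, eq_comm]
          apply Finset.prod_eq_zero (Finset.mem_univ i)
          rw [Function.update_self, if_neg hxi]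
      rw [Finset.sum_congr rfl fun x' _ => hfun x', ← Fintype.prod_sum]
      rw [Finset.prod_eq_single i
        (fun j _ hj => by rw [Function.update_of_ne hj]; exact hμ1 j y)
        (fun hi => absurd (Finset.mem_univ i) hi)]
      rw [Function.update_self]
      simp
    apply Stmt18.fisher_mono hρ (A i) C' hC'psd
      (fun x x' => if x' i = x then (1:ℝ) else 0)
      (fun x x' => by by_cases hxi : x' i = x <;> simp [hxi])
      (fun x' => by simp)
    intro x
    rw [hμeq i x]
    symm
    calc ∑ x' : κ, ((if x' i = x then (1:ℝ) else 0 : ℝ) : ℂ) • C' x'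
        = ∑ x' : κ, ∑ y, (((if x' i = x then (1:ℝ) else 0) * ∏ j, μ j (x' j) y : ℝ) : ℂ) • C y := by
          apply Finset.sum_congr rfl
          intro x' _
          show _ • (∑ y, ((∏ i, μ i (x' i) y : ℝ) : ℂ) • C y) = _
          rw [Finset.smul_sum]
          apply Finset.sum_congr rfl
          intro y _
          rw [smul_smul, ← Complex.ofReal_mul]
      _ = ∑ y, ∑ x' : κ, (((if x' i = x then (1:ℝ) else 0) * ∏ j, μ j (x' j) y : ℝ) : ℂ) • C y :=
          Finset.sum_comm
      _ = ∑ y, (μ i x y : ℂ) • C y := by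
          apply Finset.sum_congr rfl
          intro y _
          rw [← Finset.sum_smul, ← Complex.ofReal_sum, hreal y x]
  -- the chain of inequalities
  have hle : ∑ i, (Matrix.trace (FisherRho hρ (A i) * Y i)).re
      ≤ (Matrix.trace (FisherRho hρ C')).re := by
    calc ∑ i, (Matrix.trace (FisherRho hρ (A i) * Y i)).re
        ≤ ∑ i, (Matrix.trace (FisherRho hρ C' * Y i)).re :=
          Finset.sum_le_sum fun i _ => Stmt18.re_trace_mul_le (hmono i) (hY.1 i)
      _ = (Matrix.trace (FisherRho hρ C' * ∑ i, Y i)).re := by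
          rw [Matrix.mul_sum, Matrix.trace_sum, Complex.re_sum]
      _ = (Matrix.trace (FisherRho hρ C')).re := by rw [hY.2, mul_one]
  have hboundd : (Matrix.trace (FisherRho hρ C')).re ≤ (d : ℝ) := by
    have := Stmt18.fisher_trace_le_d hρ C' hC'meas
    simpa using this
  have hboundp : (Matrix.trace (FisherRho hρ C')).re ≤ ((∏ i, n i : ℕ) : ℝ) := by
    have hb := Stmt18.fisher_trace_le_card hρ C' hC'meas
    have hcard : Fintype.card κ = ∏ i, n i := by
      simp [κ, Fintype.card_pi]
    rwa [hcard] at hb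
  have hmin : ∑ i, (Matrix.trace (FisherRho hρ (A i) * Y i)).re
      ≤ ((min d (∏ i, n i) : ℕ) : ℝ) := by
    rw [Nat.cast_min]
    exact le_trans hle (le_min hboundd hboundp)
  linarith
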